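/- Let (X, 𝒜, μ) be a measure space with μ a finite measure, let q_a < q_b be real numbers, let f : X → ℝ be integrable, and let q̄, q : X → ℝ be measurable with q_a ≤ q̄(x) ≤ q_b and q_a ≤ q(x) ≤ q_b for μ-a.e. x. Assume the sign condition: for μ-a.e. x, f(x) ≥ 0 if q̄(x) = q_a, f(x) ≤ 0 if q̄(x) = q_b, and f(x) = 0 if q_a < q̄(x) < q_b. Let Ψ : [0,∞) → [0,∞) be continuous, strictly monotonically increasing, with Ψ(0) = 0 and Ψ(ε) → ∞ as ε → ∞, let Ψ⁻¹ : [0,∞) → [0,∞) denote its inverse, and assume the structural condition (μ({x : |f(x)| ≤ ε})).toReal ≤ Ψ(ε) for all ε > 0. Then, writing N = ∫ |q − q̄| dμ, it holds ∫ f·(q − q̄) dμ ≥ (1/2) · Ψ⁻¹( N / (2·(q_b − q_a)) ) · N. -/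

import Mathlib

open MeasureTheory Filter Set

/-- Proposition 3.6 (measure-theoretic form): under the first-order sign condition
and the structural condition `μ {|f| ≤ ε} ≤ Ψ ε`, the growth estimate
`∫ f (q − q̄) ≥ (1/2) Ψ⁻¹(N / (2 (q_b − q_a))) · N` holds, where
`N = ∫ |q − q̄|`. -/
theorem growth_estimate_structural
    {X : Type*} [MeasurableSpace X] (μ : Measure X) [IsFiniteMeasure μ]
    (qa qb : ℝ) (hqab : qa < qb)
    (f : X → ℝ) (hf : Integrable f μ)
    (qbar q : X → ℝ) (hqbar : Measurable qbar) (hq : Measurable q)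
    (hqbar_mem : ∀ᵐ x ∂μ, qa ≤ qbar x ∧ qbar x ≤ qb)
    (hq_mem : ∀ᵐ x ∂μ, qa ≤ q x ∧ q x ≤ qb)
    (hsign : ∀ᵐ x ∂μ,
      (qbar x = qa → 0 ≤ f x) ∧
      (qbar x = qb → f x ≤ 0) ∧
      (qa < qbar x → qbar x < qb → f x = 0))
    (Ψ Ψinv : ℝ → ℝ)
    (hΨcont : ContinuousOn Ψ (Set.Ici 0))
    (hΨmono : StrictMonoOn Ψ (Set.Ici 0))
    (hΨmaps : Set.MapsTo Ψ (Set.Ici 0) (Set.Ici 0))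
    (hΨ0 : Ψ 0 = 0)
    (hΨtop : Tendsto Ψ atTop atTop)
    (hΨinv : Set.InvOn Ψinv Ψ (Set.Ici 0) (Set.Ici 0))
    (hΨinv_maps : Set.MapsTo Ψinv (Set.Ici 0) (Set.Ici 0))
    (hstruct : ∀ ε > (0 : ℝ), (μ {x | |f x| ≤ ε}).toReal ≤ Ψ ε) :
    (1 / 2) * Ψinv ((∫ x, |q x - qbar x| ∂μ) / (2 * (qb - qa)))
        * (∫ x, |q x - qbar x| ∂μ)
      ≤ ∫ x, f x * (q x - qbar x) ∂μ := by
  have hfs := hf.aestronglyMeasurable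
  set f' := hfs.mk f with hf'def
  have hff' : f =ᵐ[μ] f' := hfs.ae_eq_mk
  have hf'meas : Measurable f' := hfs.stronglyMeasurable_mk.measurable
  have hDmeas : Measurable fun x => q x - qbar x := hq.sub hqbar
  have hqbqa : (0:ℝ) < qb - qa := by linarith
  have hDbd : ∀ᵐ x ∂μ, |q x - qbar x| ≤ qb - qa := by
    filter_upwards [hqbar_mem, hq_mem] with x h1 h2
    rw [abs_le]; constructor <;> linarith [h1.1, h1.2, h2.1, h2.2]
  have hDint : Integrable (fun x => |q x - qbar x|) μ := by
    apply Integrable.mono' (integrable_const (qb - qa))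
      hDmeas.abs.aestronglyMeasurable
    filter_upwards [hDbd] with x hx
    rwa [Real.norm_eq_abs, abs_abs]
  have h_eq : (fun x => f x * (q x - qbar x)) =ᵐ[μ]
      fun x => |f x| * |q x - qbar x| := by
    filter_upwards [hqbar_mem, hq_mem, hsign] with x h1 h2 h3
    rcases eq_or_lt_of_le h1.1 with hqa | hqa
    · have hf0 : 0 ≤ f x := h3.1 hqa.symm
      have hD0 : 0 ≤ q x - qbar x := by linarith [h2.1]
      simp only [abs_of_nonneg hf0, abs_of_nonneg hD0]
    · rcases eq_or_lt_of_le h1.2 with hqb | hqb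
      · have hf0 : f x ≤ 0 := h3.2.1 hqb
        have hD0 : q x - qbar x ≤ 0 := by linarith [h2.2]
        simp only [abs_of_nonpos hf0, abs_of_nonpos hD0]; ring
      · have h0 := h3.2.2 hqa hqb
        simp [h0]
  have habs_meas : AEStronglyMeasurable (fun x => |f x| * |q x - qbar x|) μ := by
    apply ((hf'meas.abs.mul hDmeas.abs).aestronglyMeasurable).congr
    filter_upwards [hff'] with x hx
    rw [hx]; rfl
  have hint1 : Integrable (fun x => |f x| * |q x - qbar x|) μ := by
    apply Integrable.mono' (hf.abs.const_mul (qb - qa)) habs_meas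
    filter_upwards [hDbd] with x hx
    rw [Real.norm_eq_abs, abs_mul, abs_abs, abs_abs, mul_comm (qb - qa)]
    exact mul_le_mul_of_nonneg_left hx (abs_nonneg _)
  have hfinal : ∫ x, f x * (q x - qbar x) ∂μ
      = ∫ x, |f x| * |q x - qbar x| ∂μ := integral_congr_ae h_eq
  set N := ∫ x, |q x - qbar x| ∂μ with hN
  -- key estimate
  have key : ∀ ε : ℝ, 0 < ε →
      ε * (N - (qb - qa) * Ψ ε) ≤ ∫ x, |f x| * |q x - qbar x| ∂μ := by
    intro ε hε
    set S := {x | |f' x| ≤ ε} with hS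
    have hSmeas : MeasurableSet S := measurableSet_le hf'meas.abs measurable_const
    have hμS : (μ S).toReal ≤ Ψ ε := by
      have h1 : μ S ≤ μ {x | |f x| ≤ ε} := by
        apply measure_mono_ae
        filter_upwards [hff'] with x hx hxS
        have h2 : |f' x| ≤ ε := hxS
        show |f x| ≤ ε
        rw [hx]; exact h2
      exact le_trans (ENNReal.toReal_mono (measure_ne_top μ _) h1) (hstruct ε hε)
    have hindInt : Integrable (S.indicator fun _ => (1:ℝ)) μ :=
      (integrable_const (1:ℝ)).indicator hSmeas
    have hptwise : ∀ᵐ x ∂μ,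
        ε * (|q x - qbar x| - (qb - qa) * S.indicator (fun _ => (1:ℝ)) x)
          ≤ |f x| * |q x - qbar x| := by
      filter_upwards [hDbd, hff'] with x hxb hxf
      by_cases hxS : x ∈ S
      · rw [Set.indicator_of_mem hxS]
        nlinarith [abs_nonneg (f x), abs_nonneg (q x - qbar x)]
      · rw [Set.indicator_of_notMem hxS]
        have hgt : ε < |f x| := by
          rw [hxf]; exact lt_of_not_ge (by simpa [hS] using hxS)
        nlinarith [abs_nonneg (q x - qbar x)]
    have hLint : Integrable (fun x =>
        ε * (|q x - qbar x| - (qb - qa) * S.indicator (fun _ => (1:ℝ)) x)) μ :=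
      ((hDint.sub (hindInt.const_mul (qb - qa))).const_mul ε)
    have hle := integral_mono_ae hLint hint1 hptwise
    have hcalc : ∫ x, ε * (|q x - qbar x|
        - (qb - qa) * S.indicator (fun _ => (1:ℝ)) x) ∂μ
        = ε * (N - (qb - qa) * (μ S).toReal) := by
      rw [integral_const_mul, integral_sub hDint (hindInt.const_mul (qb - qa)),
        integral_const_mul, integral_indicator_const (1:ℝ) hSmeas]
      simp [smul_eq_mul, hN, measureReal_def]
    rw [hcalc] at hle
    nlinarith [mul_le_mul_of_nonneg_left hμS (mul_pos hε hqbqa).le, hle]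
  have hNnonneg : 0 ≤ N := integral_nonneg fun x => abs_nonneg _
  rcases hNnonneg.eq_or_lt with h0 | hNpos
  · rw [← h0, mul_zero, hfinal]
    exact integral_nonneg fun x => mul_nonneg (abs_nonneg _) (abs_nonneg _)
  · set t := N / (2 * (qb - qa)) with htdef
    have ht : 0 < t := div_pos hNpos (by linarith)
    have hε0 : 0 ≤ Ψinv t := hΨinv_maps (Set.mem_Ici.mpr ht.le)
    have hΨεt : Ψ (Ψinv t) = t := hΨinv.2 (Set.mem_Ici.mpr ht.le)
    have hεpos : 0 < Ψinv t := by
      rcases hε0.eq_or_lt with he | he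
      · exfalso; rw [← he, hΨ0] at hΨεt; exact ht.ne hΨεt
      · exact he
    have hkey := key (Ψinv t) hεpos
    rw [hΨεt] at hkey
    rw [hfinal]
    calc (1/2) * Ψinv t * N = Ψinv t * (N - (qb - qa) * t) := by
          rw [htdef]; field_simp; ring
      _ ≤ _ := hkey
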